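/- For every positive integer m, the determinant of the m×m matrix with entries 1/(i+j-1)! (for i,j = 1,…,m) equals (-1)^(m(m-1)/2) / (m! · ∏_{k=1}^{m-1} (2k)! binom(m+k, m-k)). -/

import Mathlib

open Finset Polynomial Matrix

private lemma fact_mul_prod (b : ℕ) : ∀ k : ℕ, b.factorial * ∏ s ∈ range k, (b + 1 + s) = (b + k).factorial
  | 0 => by simp
  | k + 1 => by
    rw [prod_range_succ, ← mul_assoc, fact_mul_prod b k, ← add_assoc, Nat.factorial_succ]
    ring

private lemma nat_den (n : ℕ) :
    Nat.superFactorial n * (Nat.factorial (n+1) *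
      ∏ k ∈ Icc 1 n, (Nat.factorial (2*k) * (n+1+k).choose (n+1-k))) =
    ∏ i ∈ range (n+1), (i + (n+1)).factorial := by
  rw [← Nat.prod_Icc_factorial]
  have hrefl : ∏ k ∈ Icc 1 n, k.factorial = ∏ k ∈ Icc 1 n, (n+1-k).factorial := by
    apply Finset.prod_nbij' (fun k => n+1-k) (fun k => n+1-k)
    · intro a ha; simp only [mem_Icc] at *; omega
    · intro a ha; simp only [mem_Icc] at *; omega
    · intro a ha; simp only [mem_Icc] at *; omega
    · intro a ha; simp only [mem_Icc] at *; omega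
    · intro a ha; simp only [mem_Icc] at ha; congr 1; omega
  rw [hrefl, mul_left_comm, ← Finset.prod_mul_distrib]
  have hterm : ∀ k ∈ Icc 1 n, (n+1-k).factorial * (Nat.factorial (2*k) * (n+1+k).choose (n+1-k))
      = (n+1+k).factorial := by
    intro k hk
    simp only [mem_Icc] at hk
    have h := Nat.choose_mul_factorial_mul_factorial (show n+1-k ≤ n+1+k by omega)
    have h2 : (n+1+k) - (n+1-k) = 2*k := by omega
    rw [h2] at h
    rw [← h]; ring
  rw [Finset.prod_congr rfl hterm]
  have : ∏ k ∈ Icc 1 n, (n+1+k).factorial = ∏ i ∈ range n, (i + 1 + (n+1)).factorial := by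
    rw [← Finset.Ico_add_one_right_eq_Icc, Finset.prod_Ico_eq_prod_range]
    apply Finset.prod_congr (by simp) (fun i _ => by congr 1; omega)
  rw [Finset.prod_range_succ', this, mul_comm]
  congr 1
  simp

theorem reciprocal_factorial_hankel_det (m : ℕ) (hm : 0 < m) :
    Matrix.det (Matrix.of fun i j : Fin m =>
        (1 : ℚ) / (Nat.factorial ((i : ℕ) + (j : ℕ) + 1) : ℚ)) =
      (-1 : ℚ) ^ (m * (m - 1) / 2) /
        ((Nat.factorial m : ℚ) *
          ∏ k ∈ Finset.Icc 1 (m - 1),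
            (Nat.factorial (2 * k) : ℚ) * ((m + k).choose (m - k) : ℚ)) := by
  obtain ⟨n, rfl⟩ : ∃ n, m = n + 1 := ⟨m - 1, by omega⟩
  set p : Fin (n+1) → ℚ[X] :=
    fun j => ∏ s ∈ range (j : ℕ), (X + C (((n + 1) - (j:ℕ) + 1 + s : ℕ) : ℚ)) with hp
  have h_monic : ∀ j, (p j).Monic := fun j =>
    monic_prod_of_monic _ _ fun s _ => monic_X_add_C _
  have h_deg : ∀ j, (p j).natDegree = j := by
    intro j
    rw [hp, Polynomial.natDegree_prod _ _ (fun s _ => (monic_X_add_C _).ne_zero)]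
    rw [Finset.sum_congr rfl (fun s _ => Polynomial.natDegree_X_add_C _)]
    simp
  set v : Fin (n+1) → ℚ := fun i => ((Fin.rev i : ℕ) : ℚ) with hv
  have hM := Matrix.det_eval_matrixOfPolynomials_eq_det_vandermonde v p h_deg h_monic
  -- key evaluation
  have key : ∀ i j : Fin (n+1), (p (Fin.rev j)).eval ((i : ℕ) : ℚ) =
      ((Nat.factorial ((i:ℕ) + (n+1)) : ℚ)) * ((1:ℚ) / (Nat.factorial ((i:ℕ)+(j:ℕ)+1) : ℚ)) := by
    intro i j
    have hj : (j : ℕ) ≤ n := Nat.lt_succ_iff.mp j.isLt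
    have hrev : (Fin.rev j : ℕ) = n - (j:ℕ) := by
      rw [Fin.val_rev]; omega
    have h1 : (n+1) - (n - (j:ℕ)) + 1 = (j:ℕ) + 2 := by omega
    rw [hp]
    simp only [hrev, h1, eval_prod, eval_add, eval_X, eval_C]
    have natid : Nat.factorial ((i:ℕ)+(j:ℕ)+1) * ∏ s ∈ range (n - (j:ℕ)), ((i:ℕ) + ((j:ℕ) + 2 + s))
        = Nat.factorial ((i:ℕ) + (n+1)) := by
      have := fact_mul_prod ((i:ℕ)+(j:ℕ)+1) (n - (j:ℕ))
      have h2 : (i:ℕ)+(j:ℕ)+1 + (n - (j:ℕ)) = (i:ℕ) + (n+1) := by omega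
      rw [h2] at this
      rw [← this]
      congr 1
      apply Finset.prod_congr rfl (fun s _ => by omega)
    have hQ : (∏ s ∈ range (n - (j:ℕ)), (((i:ℕ):ℚ) + (((j:ℕ) + 2 + s : ℕ) : ℚ)))
        = ((∏ s ∈ range (n - (j:ℕ)), ((i:ℕ) + ((j:ℕ) + 2 + s)) : ℕ) : ℚ) := by
      push_cast
      exact Finset.prod_congr rfl fun s _ => by ring
    have hne : (Nat.factorial ((i:ℕ)+(j:ℕ)+1) : ℚ) ≠ 0 := by
      exact_mod_cast (Nat.factorial_pos _).ne'
    rw [hQ, mul_one_div, eq_div_iff hne]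
    exact_mod_cast (mul_comm ((∏ s ∈ range (n - (j:ℕ)), ((i:ℕ) + ((j:ℕ) + 2 + s)) : ℕ)) _).trans natid
  -- vandermonde determinant value
  have hvan : (Matrix.vandermonde v).det =
      (-1:ℚ)^((n+1)*n/2) * (Nat.superFactorial n : ℚ) := by
    rw [Matrix.det_vandermonde]
    have hid := Matrix.det_vandermonde_id_eq_superFactorial (R := ℚ) n
    rw [Matrix.det_vandermonde] at hid
    have step1 : ∏ i : Fin (n+1), ∏ j ∈ Ioi i, (v j - v i)
        = ∏ i : Fin (n+1), ∏ j ∈ Ioi i, ((-1:ℚ) * (((j:ℕ):ℚ) - ((i:ℕ):ℚ))) := by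
      apply Finset.prod_congr rfl; intro i _
      apply Finset.prod_congr rfl; intro j hj
      have hj' : (j:ℕ) ≤ n := Nat.lt_succ_iff.mp j.isLt
      have hi' : (i:ℕ) ≤ n := Nat.lt_succ_iff.mp i.isLt
      have e1 : v j = (n:ℚ) - (j:ℕ) := by
        rw [hv]; simp only [Fin.val_rev]
        rw [show n + 1 - ((j:ℕ)+1) = n - (j:ℕ) by omega, Nat.cast_sub hj']
      have e2 : v i = (n:ℚ) - (i:ℕ) := by
        rw [hv]; simp only [Fin.val_rev]
        rw [show n + 1 - ((i:ℕ)+1) = n - (i:ℕ) by omega, Nat.cast_sub hi']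
      rw [e1, e2]; ring
    rw [step1]
    have step2 : ∀ i : Fin (n+1), ∏ j ∈ Ioi i, ((-1:ℚ) * (((j:ℕ):ℚ) - ((i:ℕ):ℚ)))
        = (-1:ℚ)^(n - (i:ℕ)) * ∏ j ∈ Ioi i, (((j:ℕ):ℚ) - ((i:ℕ):ℚ)) := by
      intro i
      rw [Finset.prod_mul_distrib, Finset.prod_const, Fin.card_Ioi,
        show n + 1 - 1 - (i:ℕ) = n - (i:ℕ) from by omega]
    rw [Finset.prod_congr rfl (fun i _ => step2 i), Finset.prod_mul_distrib, hid,
      Finset.prod_pow_eq_pow_sum]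
    congr 2
    rw [Fin.sum_univ_eq_sum_range]
    have := Finset.sum_range_reflect (fun k => k) (n+1)
    calc ∑ i ∈ range (n+1), (n - i) = ∑ i ∈ range (n+1), (n + 1 - 1 - i) := by
          apply Finset.sum_congr rfl; intros; omega
      _ = ∑ i ∈ range (n+1), i := this
      _ = (n+1)*n/2 := by rw [Finset.sum_range_id]; congr 1
  -- matrix relation
  set A : Matrix (Fin (n+1)) (Fin (n+1)) ℚ :=
    Matrix.of (fun i j : Fin (n+1) => (1 : ℚ) / (Nat.factorial ((i : ℕ) + (j : ℕ) + 1) : ℚ)) with hA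
  have hsub : (Matrix.of (fun i j => (p j).eval (v i))).det
      = (∏ i : Fin (n+1), (Nat.factorial ((i:ℕ) + (n+1)) : ℚ)) * A.det := by
    rw [← Matrix.det_submatrix_equiv_self Fin.revPerm]
    have heq : (Matrix.of (fun i j => (p j).eval (v i))).submatrix Fin.revPerm Fin.revPerm
        = Matrix.of (fun i j : Fin (n+1) =>
            (Nat.factorial ((i:ℕ) + (n+1)) : ℚ) * A i j) := by
      ext i j
      simp only [Matrix.submatrix_apply, Matrix.of_apply, hv, Fin.revPerm_apply, Fin.rev_rev]
      exact key i j
    rw [heq, Matrix.det_mul_column]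
  have hP : (∏ i : Fin (n+1), (Nat.factorial ((i:ℕ) + (n+1)) : ℚ)) ≠ 0 :=
    Finset.prod_ne_zero_iff.mpr fun i _ => by exact_mod_cast (Nat.factorial_pos _).ne'
  have main : (∏ i : Fin (n+1), (Nat.factorial ((i:ℕ) + (n+1)) : ℚ)) * A.det
      = (-1:ℚ)^((n+1)*n/2) * (Nat.superFactorial n : ℚ) := by
    rw [← hsub, ← hM, hvan]
  -- final arithmetic
  have hden : ((Nat.factorial (n+1) : ℚ) *
      ∏ k ∈ Finset.Icc 1 (n+1-1), (Nat.factorial (2*k) : ℚ) * (((n+1)+k).choose ((n+1)-k) : ℚ)) ≠ 0 := by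
    apply mul_ne_zero
    · exact_mod_cast (Nat.factorial_pos _).ne'
    · apply Finset.prod_ne_zero_iff.mpr
      intro k hk
      simp only [mem_Icc] at hk
      apply mul_ne_zero
      · exact_mod_cast (Nat.factorial_pos _).ne'
      · have : 0 < ((n+1)+k).choose ((n+1)-k) := Nat.choose_pos (by omega)
        exact_mod_cast this.ne'
  rw [eq_div_iff hden]
  have hAdet : A.det = ((-1:ℚ)^((n+1)*n/2) * (Nat.superFactorial n : ℚ))
      / (∏ i : Fin (n+1), (Nat.factorial ((i:ℕ) + (n+1)) : ℚ)) := by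
    field_simp
    linear_combination main
  rw [hAdet]
  rw [div_mul_eq_mul_div, div_eq_iff hP]
  rw [show (n+1) * (n+1-1) / 2 = (n+1)*n/2 from by norm_num]
  have hprod : (∏ i : Fin (n+1), (Nat.factorial ((i:ℕ) + (n+1)) : ℚ))
      = ((∏ i ∈ range (n+1), (i + (n+1)).factorial : ℕ) : ℚ) := by
    rw [Nat.cast_prod]
    exact Fin.prod_univ_eq_prod_range (fun k => (((k + (n+1)).factorial : ℕ) : ℚ)) (n+1)
  have hnat := nat_den n
  calc (-1:ℚ)^((n+1)*n/2) * (Nat.superFactorial n : ℚ) *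
        ((Nat.factorial (n+1) : ℚ) * ∏ k ∈ Finset.Icc 1 (n+1-1),
          (Nat.factorial (2*k) : ℚ) * (((n+1)+k).choose ((n+1)-k) : ℚ))
      = (-1:ℚ)^((n+1)*n/2) * ((Nat.superFactorial n *
          (Nat.factorial (n+1) * ∏ k ∈ Icc 1 n, (Nat.factorial (2*k) * ((n+1)+k).choose ((n+1)-k))) : ℕ) : ℚ) := by
        simp only [Nat.add_sub_cancel]
        push_cast
        ring
    _ = (-1:ℚ)^((n+1)*n/2) * (∏ i : Fin (n+1), (Nat.factorial ((i:ℕ) + (n+1)) : ℚ)) := by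
        rw [hnat, hprod]
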